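/- arXiv:2008.10718 — 3 statements merged into one kernel-verified Lean document; each statement's English description precedes it below -/
import Mathlib

section
/- Let b be an odd integer, p a prime with p ≡ 1 (mod 4), and x, y, u, v integers with p = x² + (b²+4)y² = u² + v², p ≠ b² + 4, u ≡ 1 (mod 4), and the odd parts of x, y, v all ≡ 1 (mod 4). If the conclusion C(b) of Sun's Conjecture 1 (defined in the context) holds, then C(−b) holds. -/
/-- The Lucas sequence `U_n(b,c)`: `U_0 = 0`, `U_1 = 1`,
`U_{n+1} = b·U_n − c·U_{n−1}`. -/
def lucasU (b c : ℤ) : ℕ → ℤ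
  | 0 => 0
  | 1 => 1
  | n + 2 => b * lucasU b c (n + 1) - c * lucasU b c n

/-- The Lucas sequence `V_n(b,c)`: `V_0 = 2`, `V_1 = b`,
`V_{n+1} = b·V_n − c·V_{n−1}`. -/
def lucasV (b c : ℤ) : ℕ → ℤ
  | 0 => 2
  | 1 => b
  | n + 2 => b * lucasV b c (n + 1) - c * lucasV b c n

/-- The odd part of an integer `m`, i.e. `m / 2^(v₂ m)`. -/
def oddPart (m : ℤ) : ℤ := m / 2 ^ padicValInt 2 m

/-- `2‖m`: `2` divides `m` but `4` does not. -/
def ExactlyTwo (m : ℤ) : Prop := 2 ∣ m ∧ ¬ (4 ∣ m)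

/-- The conclusion `C(β)` of Sun's Conjecture 1, relative to fixed `p, x, y, u, v`. -/
def Conj1Concl (p : ℕ) (x y u v β : ℤ) : Prop :=
  (¬ (4 ∣ x * y) →
    (p : ℤ) ∣ lucasV β (-1) ((p - 1) / 4) ∧
    ((ExactlyTwo x ∧ (β % 8 = 1 ∨ β % 8 = 3)) →
      x * lucasU β (-1) ((p - 1) / 4) ≡ (-1) ^ (v / 4).natAbs * (2 * y) [ZMOD (p : ℤ)]) ∧
    ((ExactlyTwo x ∧ (β % 8 = 5 ∨ β % 8 = 7)) →
      x * lucasU β (-1) ((p - 1) / 4) ≡ -((-1) ^ (v / 4).natAbs * (2 * y)) [ZMOD (p : ℤ)]) ∧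
    (ExactlyTwo y →
      x * u * lucasU β (-1) ((p - 1) / 4) ≡ 2 * y * v [ZMOD (p : ℤ)])) ∧
  (4 ∣ x * y →
    (p : ℤ) ∣ lucasU β (-1) ((p - 1) / 4) ∧
    (4 ∣ y →
      lucasV β (-1) ((p - 1) / 4) ≡ 2 * (-1) ^ ((y + v) / 4).natAbs [ZMOD (p : ℤ)]) ∧
    ((4 ∣ x ∧ (β % 8 = 1 ∨ β % 8 = 3)) →
      u * lucasV β (-1) ((p - 1) / 4) ≡ -(2 * (-1) ^ (x / 4).natAbs * v) [ZMOD (p : ℤ)]) ∧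
    ((4 ∣ x ∧ (β % 8 = 5 ∨ β % 8 = 7)) →
      u * lucasV β (-1) ((p - 1) / 4) ≡ 2 * (-1) ^ (x / 4).natAbs * v [ZMOD (p : ℤ)]))

lemma lucasU_neg (b : ℤ) : ∀ n, lucasU (-b) (-1) n = (-1) ^ (n + 1) * lucasU b (-1) n
  | 0 => by simp [lucasU]
  | 1 => by simp [lucasU]
  | n + 2 => by
    have h1 := lucasU_neg b (n + 1)
    have h2 := lucasU_neg b n
    simp only [lucasU, h1, h2]
    ring

lemma lucasV_neg (b : ℤ) : ∀ n, lucasV (-b) (-1) n = (-1) ^ n * lucasV b (-1) n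
  | 0 => by simp [lucasV]
  | 1 => by simp [lucasV]
  | n + 2 => by
    have h1 := lucasV_neg b (n + 1)
    have h2 := lucasV_neg b n
    simp only [lucasV, h1, h2]
    ring

lemma sq8_odd (z : ℤ) (h : Odd z) : (z : ZMod 8) ^ 2 = 1 := by
  obtain ⟨k, hk⟩ := h
  subst hk
  push_cast
  have : ∀ a : ZMod 8, (2 * a + 1) ^ 2 = 1 := by decide
  exact this _

lemma sq8_two (z : ℤ) (h : ExactlyTwo z) : (z : ZMod 8) ^ 2 = 4 := by
  obtain ⟨a, ha⟩ := h.1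
  have ha2 : Odd a := by
    rcases Int.even_or_odd a with he | ho
    · exfalso; obtain ⟨c, hc⟩ := he; exact h.2 ⟨c, by omega⟩
    · exact ho
  obtain ⟨k, hk⟩ := ha2
  subst hk ha
  push_cast
  have : ∀ a : ZMod 8, (2 * (2 * a + 1)) ^ 2 = 4 := by decide
  exact this _

lemma mod8_of_cast (p : ℕ) (c : ℕ) (h : (p : ZMod 8) = (c : ℕ)) : p % 8 = c % 8 := by
  have := (ZMod.natCast_eq_natCast_iff p c 8).mp h
  exact this

theorem statement6 (p : ℕ) (hp : p.Prime) (hp4 : p % 4 = 1)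
    (b x y u v : ℤ) (hb : Odd b)
    (hpx : (p : ℤ) = x ^ 2 + (b ^ 2 + 4) * y ^ 2)
    (hpu : (p : ℤ) = u ^ 2 + v ^ 2)
    (hne : (p : ℤ) ≠ b ^ 2 + 4)
    (hu : u ≡ 1 [ZMOD 4])
    (hx : oddPart x ≡ 1 [ZMOD 4])
    (hy : oddPart y ≡ 1 [ZMOD 4])
    (hv : oddPart v ≡ 1 [ZMOD 4])
    (hC : Conj1Concl p x y u v b) :
    Conj1Concl p x y u v (-b) := by
  obtain ⟨hC1, hC2⟩ := hC
  set n := (p - 1) / 4 with hn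
  have hp1 : 1 ≤ p := hp.one_lt.le
  have hUn := lucasU_neg b n
  have hVn := lucasV_neg b n
  have hpodd : p % 2 = 1 := by omega
  have hZ8 : (p : ZMod 8) = (x : ZMod 8) ^ 2 + ((b : ZMod 8) ^ 2 + 4) * (y : ZMod 8) ^ 2 := by
    have := congrArg (fun z : ℤ => (z : ZMod 8)) hpx
    push_cast at this
    exact this
  have hb8 : (b : ZMod 8) ^ 2 = 1 := sq8_odd b hb
  constructor
  · intro h4
    obtain ⟨hd, h13, h57, h2y⟩ := hC1 h4
    refine ⟨?_, ?_, ?_, ?_⟩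
    · rw [hVn]; exact Dvd.dvd.mul_left hd _
    · rintro ⟨hx2, hcls⟩
      have hbc : b % 8 = 5 ∨ b % 8 = 7 := by
        rcases hcls with h | h <;> omega
      have key := h57 ⟨hx2, hbc⟩
      -- y is odd, so p ≡ 1 (mod 8), n even
      have hyodd : Odd y := by
        rcases Int.even_or_odd y with he | ho
        · exfalso; obtain ⟨c, hc⟩ := he; obtain ⟨a, ha⟩ := hx2.1
          exact h4 ⟨a * c, by rw [ha, hc]; ring⟩
        · exact ho
      have hx8 : (x : ZMod 8) ^ 2 = 4 := sq8_two x hx2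
      have hy8 : (y : ZMod 8) ^ 2 = 1 := sq8_odd y hyodd
      rw [hx8, hy8, hb8] at hZ8
      have h1 : (p : ZMod 8) = ((1 : ℕ) : ZMod 8) := by rw [hZ8]; decide
      have hp8 : p % 8 = 1 := by have := mod8_of_cast p 1 h1; omega
      have hne : n % 2 = 0 := by omega
      have hpow : (-1 : ℤ) ^ (n + 1) = -1 := Odd.neg_one_pow (Nat.odd_iff.mpr (by omega))
      rw [hUn, hpow]
      have h1' : x * (-1 * lucasU b (-1) n) = -(x * lucasU b (-1) n) := by ring
      rw [h1']
      have := key.neg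
      rwa [neg_neg] at this
    · rintro ⟨hx2, hcls⟩
      have hbc : b % 8 = 1 ∨ b % 8 = 3 := by
        rcases hcls with h | h <;> omega
      have key := h13 ⟨hx2, hbc⟩
      have hyodd : Odd y := by
        rcases Int.even_or_odd y with he | ho
        · exfalso; obtain ⟨c, hc⟩ := he; obtain ⟨a, ha⟩ := hx2.1
          exact h4 ⟨a * c, by rw [ha, hc]; ring⟩
        · exact ho
      have hx8 : (x : ZMod 8) ^ 2 = 4 := sq8_two x hx2
      have hy8 : (y : ZMod 8) ^ 2 = 1 := sq8_odd y hyodd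
      rw [hx8, hy8, hb8] at hZ8
      have h1 : (p : ZMod 8) = ((1 : ℕ) : ZMod 8) := by rw [hZ8]; decide
      have hp8 : p % 8 = 1 := by have := mod8_of_cast p 1 h1; omega
      have hne : n % 2 = 0 := by omega
      have hpow : (-1 : ℤ) ^ (n + 1) = -1 := Odd.neg_one_pow (Nat.odd_iff.mpr (by omega))
      rw [hUn, hpow]
      have h1' : x * (-1 * lucasU b (-1) n) = -(x * lucasU b (-1) n) := by ring
      rw [h1']
      exact key.neg
    · intro hy2
      have key := h2y hy2
      have hxodd : Odd x := by
        rcases Int.even_or_odd x with he | ho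
        · exfalso; obtain ⟨a, ha⟩ := he; obtain ⟨c, hc⟩ := hy2.1
          exact h4 ⟨a * c, by rw [ha, hc]; ring⟩
        · exact ho
      have hx8 : (x : ZMod 8) ^ 2 = 1 := sq8_odd x hxodd
      have hy8 : (y : ZMod 8) ^ 2 = 4 := sq8_two y hy2
      rw [hx8, hy8, hb8] at hZ8
      have h1 : (p : ZMod 8) = ((5 : ℕ) : ZMod 8) := by rw [hZ8]; decide
      have hp8 : p % 8 = 5 := by have := mod8_of_cast p 5 h1; omega
      have hno : n % 2 = 1 := by omega
      have hpow : (-1 : ℤ) ^ (n + 1) = 1 := Even.neg_one_pow (Nat.even_iff.mpr (by omega))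
      rw [hUn, hpow, one_mul]
      exact key
  · intro h4
    obtain ⟨hd, hy4, h13, h57⟩ := hC2 h4
    have h4p : ¬ ((4 : ℤ) ∣ (p : ℤ)) := by
      intro h
      have : (4 : ℕ) ∣ p := by exact_mod_cast h
      omega
    refine ⟨?_, ?_, ?_, ?_⟩
    · rw [hUn]; exact Dvd.dvd.mul_left hd _
    · intro hy'
      have key := hy4 hy'
      have hxodd : Odd x := by
        rcases Int.even_or_odd x with he | ho
        · exfalso; obtain ⟨a, ha⟩ := he; obtain ⟨c, hc⟩ := hy'
          exact h4p ⟨a ^ 2 + (b ^ 2 + 4) * (4 * c ^ 2), by rw [hpx, ha, hc]; ring⟩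
        · exact ho
      have hx8 : (x : ZMod 8) ^ 2 = 1 := sq8_odd x hxodd
      have hy8 : (y : ZMod 8) ^ 2 = 0 := by
        obtain ⟨c, hc⟩ := hy'; subst hc; push_cast
        have : ∀ a : ZMod 8, (4 * a) ^ 2 = 0 := by decide
        exact this _
      rw [hx8, hy8, hb8] at hZ8
      have h1 : (p : ZMod 8) = ((1 : ℕ) : ZMod 8) := by rw [hZ8]; decide
      have hp8 : p % 8 = 1 := by have := mod8_of_cast p 1 h1; omega
      have hne : n % 2 = 0 := by omega
      have hpow : (-1 : ℤ) ^ n = 1 := Even.neg_one_pow (Nat.even_iff.mpr (by omega))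
      rw [hVn, hpow, one_mul]
      exact key
    · rintro ⟨hx4, hcls⟩
      have hbc : b % 8 = 5 ∨ b % 8 = 7 := by
        rcases hcls with h | h <;> omega
      have key := h57 ⟨hx4, hbc⟩
      have hyodd : Odd y := by
        rcases Int.even_or_odd y with he | ho
        · exfalso; obtain ⟨c, hc⟩ := he; obtain ⟨a, ha⟩ := hx4
          exact h4p ⟨4 * a ^ 2 + (b ^ 2 + 4) * c ^ 2, by rw [hpx, ha, hc]; ring⟩
        · exact ho
      have hx8 : (x : ZMod 8) ^ 2 = 0 := by
        obtain ⟨a, ha⟩ := hx4; subst ha; push_cast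
        have : ∀ a : ZMod 8, (4 * a) ^ 2 = 0 := by decide
        exact this _
      have hy8 : (y : ZMod 8) ^ 2 = 1 := sq8_odd y hyodd
      rw [hx8, hy8, hb8] at hZ8
      have h1 : (p : ZMod 8) = ((5 : ℕ) : ZMod 8) := by rw [hZ8]; decide
      have hp8 : p % 8 = 5 := by have := mod8_of_cast p 5 h1; omega
      have hno : n % 2 = 1 := by omega
      have hpow : (-1 : ℤ) ^ n = -1 := Odd.neg_one_pow (Nat.odd_iff.mpr (by omega))
      rw [hVn, hpow]
      have h1' : u * (-1 * lucasV b (-1) n) = -(u * lucasV b (-1) n) := by ring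
      rw [h1']
      exact key.neg
    · rintro ⟨hx4, hcls⟩
      have hbc : b % 8 = 1 ∨ b % 8 = 3 := by
        rcases hcls with h | h <;> omega
      have key := h13 ⟨hx4, hbc⟩
      have hyodd : Odd y := by
        rcases Int.even_or_odd y with he | ho
        · exfalso; obtain ⟨c, hc⟩ := he; obtain ⟨a, ha⟩ := hx4
          exact h4p ⟨4 * a ^ 2 + (b ^ 2 + 4) * c ^ 2, by rw [hpx, ha, hc]; ring⟩
        · exact ho
      have hx8 : (x : ZMod 8) ^ 2 = 0 := by
        obtain ⟨a, ha⟩ := hx4; subst ha; push_cast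
        have : ∀ a : ZMod 8, (4 * a) ^ 2 = 0 := by decide
        exact this _
      have hy8 : (y : ZMod 8) ^ 2 = 1 := sq8_odd y hyodd
      rw [hx8, hy8, hb8] at hZ8
      have h1 : (p : ZMod 8) = ((5 : ℕ) : ZMod 8) := by rw [hZ8]; decide
      have hp8 : p % 8 = 5 := by have := mod8_of_cast p 5 h1; omega
      have hno : n % 2 = 1 := by omega
      have hpow : (-1 : ℤ) ^ n = -1 := Odd.neg_one_pow (Nat.odd_iff.mpr (by omega))
      rw [hVn, hpow]
      have h1' : u * (-1 * lucasV b (-1) n) = -(u * lucasV b (-1) n) := by ring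
      rw [h1']
      have := key.neg
      rwa [neg_neg] at this
end

section
/- Let ℤ₂ denote the ring of 2-adic integers and R = ℤ₂[i] = ℤ₂[X]/(X²+1) the ring of integers of ℚ₂(i). Let α, β, α', β' ∈ ℤ₂ satisfy α² + β² = α'² + β'² = 1. Assume either (a) α and α' are units of ℤ₂, α ≡ α' (mod 4), and β ≡ β' (mod 8), or (b) β and β' are units of ℤ₂, β ≡ β' (mod 4), and α ≡ α' (mod 8). Then α + β·i is a unit of R, and there exist an integer t and an element B ∈ R with B ≡ 1 (mod (2+2i)·R) such that (α' + β'·i) = 5^{2t}·B⁴·(α + β·i), where 5^{2t} denotes the 2t-th power of the unit 5 in ℤ₂ (t may be negative). -/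
open Polynomial

/-- The ring `ℤ₂[i] = ℤ₂[X]/(X²+1)`, the ring of integers of `ℚ₂(i)`. -/
abbrev Z2i : Type := AdjoinRoot (X ^ 2 + 1 : ℤ_[2][X])

/-- The element `i` of `ℤ₂[i]`. -/
noncomputable abbrev Z2i.i : Z2i := AdjoinRoot.root _

/-- The canonical map `ℤ₂ → ℤ₂[i]`. -/
noncomputable abbrev Z2i.of : ℤ_[2] →+* Z2i := AdjoinRoot.of _


lemma two_ne_unit : ¬ IsUnit (2 : ℤ_[2]) := by
  rw [PadicInt.isUnit_iff]
  have : ‖(2 : ℤ_[2])‖ = 2⁻¹ := by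
    have := @PadicInt.norm_p 2 ⟨Nat.prime_two⟩
    simpa using this
  rw [this]; norm_num

lemma odd_not_two_dvd (k : ℤ_[2]) : ¬ (2 : ℤ_[2]) ∣ (2*k+1) := by
  rintro ⟨c, hc⟩
  exact two_ne_unit (isUnit_of_dvd_one ⟨c - k, by linear_combination hc⟩)

lemma isUnit_of_odd (x : ℤ_[2]) (hx : ¬ (2:ℤ_[2]) ∣ x) : IsUnit x := by
  rw [PadicInt.isUnit_iff]
  by_contra hne
  exact hx ((PadicInt.norm_lt_one_iff_dvd x).1
    (lt_of_le_of_ne (PadicInt.norm_le_one x) hne))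

lemma two_dvd_sub_one (x : ℤ_[2]) (h : ¬ (2:ℤ_[2]) ∣ x) : (2:ℤ_[2]) ∣ (x - 1) := by
  have hker : ∀ y : ℤ_[2], (2:ℤ_[2]) ∣ y ↔ (PadicInt.toZMod y : ZMod 2) = 0 := by
    intro y
    rw [show ((PadicInt.toZMod y : ZMod 2) = 0) ↔ y ∈ RingHom.ker (PadicInt.toZMod : ℤ_[2] →+* ZMod 2) from Iff.rfl,
      PadicInt.ker_toZMod, PadicInt.maximalIdeal_eq_span_p, Ideal.mem_span_singleton]
    norm_num
  rw [hker]
  have h0 : (PadicInt.toZMod x : ZMod 2) ≠ 0 := fun h0 => h ((hker x).2 h0)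
  have h1 : (PadicInt.toZMod x : ZMod 2) = 1 := by
    have : ∀ z : ZMod 2, z ≠ 0 → z = 1 := by decide
    exact this _ h0
  simp [map_sub, h1]

lemma parity (x : ℤ_[2]) : (∃ k, x = 2*k) ∨ (∃ k, x = 2*k+1) := by
  by_cases h : (2:ℤ_[2]) ∣ x
  · obtain ⟨k, hk⟩ := h; exact Or.inl ⟨k, hk⟩
  · obtain ⟨k, hk⟩ := two_dvd_sub_one x h
    exact Or.inr ⟨k, by linear_combination hk⟩

lemma H1 (u V : ℤ_[2]) : ∃ z : ℤ_[2],
    (1+8*u)*(z - 4*z^3) - V*(1-24*z^2+16*z^4) = 0 ∧ (2:ℤ_[2]) ∣ (z - V) := by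
  set F : ℤ_[2][X] := C (1+8*u) * X - C (4*(1+8*u)) * X^3 + C (24*V) * X^2 - C (16*V) * X^4 - C V with hF
  have hFeval : ∀ z : ℤ_[2], F.eval z = (1+8*u)*(z - 4*z^3) - V*(1-24*z^2+16*z^4) := by
    intro z; simp [hF]; try ring
  have hFder : ∀ z : ℤ_[2], F.derivative.eval z =
      (1+8*u) - 12*(1+8*u)*z^2 + 48*V*z - 64*V*z^3 := by
    intro z; simp [hF]; try ring
  have hodd : ¬ (2:ℤ_[2]) ∣ F.derivative.eval V := by
    rw [hFder, show (1+8*u) - 12*(1+8*u)*V^2 + 48*V*V - 64*V*V^3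
      = 2*(4*u - 6*(1+8*u)*V^2 + 24*V^2 - 32*V^4) + 1 by ring]
    exact odd_not_two_dvd _
  have hder1 : ‖F.derivative.eval V‖ = 1 := PadicInt.isUnit_iff.1 (isUnit_of_odd _ hodd)
  have heval : (2:ℤ_[2]) ∣ F.eval V :=
    ⟨4*u*V + 12*V^3 - 2*V^3 - 16*u*V^3 - 8*V^5, by rw [hFeval]; ring⟩
  have hnorm : ‖F.eval V‖ < ‖F.derivative.eval V‖^2 := by
    rw [hder1, one_pow]
    exact (PadicInt.norm_lt_one_iff_dvd _).2 (by simpa using heval)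
  obtain ⟨z, hz0, hzdist, -, -⟩ := hensels_lemma hnorm
  refine ⟨z, by rw [← hFeval]; exact hz0, ?_⟩
  have : ‖z - V‖ < 1 := by rw [← hder1]; exact hzdist
  simpa using (PadicInt.norm_lt_one_iff_dvd _).1 this

lemma H2 (W : ℤ_[2]) : ∃ y : ℤ_[2], y + 6*y^2 + 16*y^3 + 16*y^4 = W := by
  set F : ℤ_[2][X] := X + C 6 * X^2 + C 16 * X^3 + C 16 * X^4 - C W with hF
  have hFeval : ∀ z : ℤ_[2], F.eval z = z + 6*z^2 + 16*z^3 + 16*z^4 - W := by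
    intro z; simp [hF]; try ring
  have hFder : ∀ z : ℤ_[2], F.derivative.eval z = 1 + 12*z + 48*z^2 + 64*z^3 := by
    intro z; simp [hF]; try ring
  have hodd : ¬ (2:ℤ_[2]) ∣ F.derivative.eval W := by
    rw [hFder, show (1:ℤ_[2]) + 12*W + 48*W^2 + 64*W^3 = 2*(6*W + 24*W^2 + 32*W^3) + 1 by ring]
    exact odd_not_two_dvd _
  have hder1 : ‖F.derivative.eval W‖ = 1 := PadicInt.isUnit_iff.1 (isUnit_of_odd _ hodd)
  have heval : (2:ℤ_[2]) ∣ F.eval W := ⟨3*W^2 + 8*W^3 + 8*W^4, by rw [hFeval]; ring⟩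
  have hnorm : ‖F.eval W‖ < ‖F.derivative.eval W‖^2 := by
    rw [hder1, one_pow]
    exact (PadicInt.norm_lt_one_iff_dvd _).2 (by simpa using heval)
  obtain ⟨z, hz0, -, -, -⟩ := hensels_lemma hnorm
  exact ⟨z, by have := hFeval z; rw [show F.eval z = 0 from hz0] at this; linear_combination -this⟩

lemma hi_sq : Z2i.i^2 = -1 := by
  have h0 : (AdjoinRoot.mk (X^2+1 : ℤ_[2][X])) (X^2+1 : ℤ_[2][X]) = 0 := AdjoinRoot.mk_self
  rw [map_add, map_pow, map_one, AdjoinRoot.mk_X] at h0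
  linear_combination h0

lemma quart (x y : ℤ_[2]) : (Z2i.of x + Z2i.of y * Z2i.i)^4 =
    Z2i.of (x^4 - 6*x^2*y^2 + y^4) + Z2i.of (4*x^3*y - 4*x*y^3) * Z2i.i := by
  simp only [map_add, map_sub, map_mul, map_pow, map_ofNat]
  linear_combination (6*(Z2i.of x)^2*(Z2i.of y)^2 + 4*(Z2i.of x)*(Z2i.of y)^3*Z2i.i
    + (Z2i.of y)^4*Z2i.i^2 - (Z2i.of y)^4) * hi_sq


lemma key (u v : ℤ_[2]) (huv : (2:ℤ_[2]) ∣ (u - v)) :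
    ∃ B : Z2i, B - 1 ∈ Ideal.span {(2 + 2*Z2i.i : Z2i)} ∧
      B^4 = Z2i.of (1+8*u) + Z2i.of (8*v) * Z2i.i := by
  obtain ⟨z, hz, hzv⟩ := H1 u v
  have hc2odd : ¬ (2:ℤ_[2]) ∣ (1 - 24*z^2 + 16*z^4) := by
    rw [show (1:ℤ_[2]) - 24*z^2 + 16*z^4 = 2*(-12*z^2+8*z^4)+1 by ring]
    exact odd_not_two_dvd _
  have hc2u : IsUnit (1 - 24*z^2 + 16*z^4) := isUnit_of_odd _ hc2odd
  set ei : ℤ_[2] := ↑hc2u.unit⁻¹ with hei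
  have hee : (1 - 24*z^2 + 16*z^4) * ei = 1 := hc2u.mul_val_inv
  -- parity bookkeeping
  obtain ⟨m, hm⟩ := hzv
  obtain ⟨n, hn⟩ := huv
  have hpar : ∃ hp : ℤ_[2], u + 3*z^2 - 2*z^4 = 2*hp := by
    rcases parity z with ⟨k, hk⟩ | ⟨k, hk⟩
    · exact ⟨k - m + n + 6*k^2 - z^4, by linear_combination hn - hm + (3*z+6*k+1)*hk⟩
    · exact ⟨6*k^2 + 7*k + 2 - m + n - z^4, by linear_combination hn - hm + (3*z+6*k+4)*hk⟩
  obtain ⟨hp, hhp⟩ := hpar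
  obtain ⟨y, hy⟩ := H2 (hp * ei)
  have hw : (1+8*u) * ei = 1 + 16*(hp*ei) := by linear_combination hee + 8*ei*hhp
  have hr4 : (1+4*y)^4 = (1+8*u) * ei := by linear_combination 16*hy - hw
  have hA : (1+4*y)^4 * (1 - 24*z^2 + 16*z^4) = 1+8*u := by
    linear_combination (1 - 24*z^2 + 16*z^4)*hr4 + (1+8*u)*hee
  have hB : (1+4*y)^4 * (z - 4*z^3) = v := by
    have hc : (1 - 24*z^2 + 16*z^4) * ((1+4*y)^4 * (z - 4*z^3)) = (1 - 24*z^2 + 16*z^4) * v := by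
      linear_combination (z - 4*z^3)*hA + hz
    exact mul_left_cancel₀ hc2u.ne_zero hc
  have hcomp1 : (1+4*y)^4 - 6*(1+4*y)^2*(2*(1+4*y)*z)^2 + (2*(1+4*y)*z)^4 = 1+8*u := by
    linear_combination hA
  have hcomp2 : 4*(1+4*y)^3*(2*(1+4*y)*z) - 4*(1+4*y)*(2*(1+4*y)*z)^3 = 8*v := by
    linear_combination 8*hB
  have hB0 : (Z2i.of (1+4*y) + Z2i.of (2*(1+4*y)*z) * Z2i.i)^4
      = Z2i.of (1+8*u) + Z2i.of (8*v) * Z2i.i := by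
    rw [quart, hcomp1, hcomp2]
  rcases parity z with ⟨k, hk⟩ | ⟨k, hk⟩
  · refine ⟨Z2i.of (1+4*y) + Z2i.of (2*(1+4*y)*z) * Z2i.i,
      Ideal.mem_span_singleton.2 ⟨(Z2i.of y + Z2i.of (1+4*y) * Z2i.of k)
        + (Z2i.of (1+4*y) * Z2i.of k - Z2i.of y) * Z2i.i, ?_⟩, hB0⟩
    have mhk : Z2i.of z = 2 * Z2i.of k := by
      rw [hk]; simp only [map_mul, map_ofNat]
    simp only [map_add, map_mul, map_one, map_ofNat]
    linear_combination (2*(1 + 4*Z2i.of y)*Z2i.i)*mhk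
      - 2*((1 + 4*Z2i.of y)*Z2i.of k - Z2i.of y)*hi_sq
  · refine ⟨-(Z2i.of (1+4*y) + Z2i.of (2*(1+4*y)*z) * Z2i.i),
      Ideal.mem_span_singleton.2 ⟨-(1 + 3*Z2i.of y + Z2i.of (1+4*y) * Z2i.of k)
        + (-(Z2i.of y) - Z2i.of (1+4*y) * Z2i.of k) * Z2i.i, ?_⟩, by
        rw [show (-(Z2i.of (1+4*y) + Z2i.of (2*(1+4*y)*z) * Z2i.i))^4
          = (Z2i.of (1+4*y) + Z2i.of (2*(1+4*y)*z) * Z2i.i)^4 from by ring, hB0]⟩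
    have mhk : Z2i.of z = 2 * Z2i.of k + 1 := by
      rw [hk]; simp only [map_add, map_mul, map_one, map_ofNat]
    simp only [map_add, map_mul, map_one, map_ofNat]
    linear_combination (-(2*(1 + 4*Z2i.of y)*Z2i.i))*mhk
      + 2*(Z2i.of y + (1 + 4*Z2i.of y)*Z2i.of k)*hi_sq

lemma four_dvd (a b : ℤ_[2]) (ha : IsUnit a) (h : a^2+b^2 = 1) : ∃ b1, b = 4*b1 := by
  have hna : ¬ (2:ℤ_[2]) ∣ a := fun hd => two_ne_unit (isUnit_of_dvd_unit hd ha)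
  rcases parity a with ⟨k,hk⟩|⟨k,hk⟩
  · exact absurd ⟨k,hk⟩ hna
  · have hb2 : ∃ n, b^2 = 8*n := by
      rcases parity k with ⟨m,hm⟩|⟨m,hm⟩
      · exact ⟨-(m*(k+1)), by linear_combination h - (a+2*k+1)*hk - 4*(k+1)*hm⟩
      · exact ⟨-(k*(m+1)), by linear_combination h - (a+2*k+1)*hk - 4*k*hm⟩
    obtain ⟨n, hn⟩ := hb2
    rcases parity b with ⟨j,hj⟩|⟨j,hj⟩
    · have hj2 : j^2 = 2*n := by
        have h4 : (4:ℤ_[2]) * (j^2) = 4 * (2*n) := by linear_combination hn - (b+2*j)*hj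
        exact mul_left_cancel₀ (by norm_num) h4
      rcases parity j with ⟨i1,hi1⟩|⟨i1,hi1⟩
      · exact ⟨i1, by rw [hj, hi1]; ring⟩
      · exact absurd ⟨n - 2*i1^2 - 2*i1, by linear_combination hj2 - (j+2*i1+1)*hi1⟩
          (odd_not_two_dvd 0)
    · exact absurd ⟨4*n - 2*j^2 - 2*j, by linear_combination hn - (b+2*j+1)*hj⟩
        (odd_not_two_dvd 0)

theorem statement9 (a b a' b' : ℤ_[2])
    (h : a ^ 2 + b ^ 2 = 1) (h' : a' ^ 2 + b' ^ 2 = 1)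
    (hcase :
      (IsUnit a ∧ IsUnit a' ∧ (4 : ℤ_[2]) ∣ a - a' ∧ (8 : ℤ_[2]) ∣ b - b') ∨
      (IsUnit b ∧ IsUnit b' ∧ (4 : ℤ_[2]) ∣ b - b' ∧ (8 : ℤ_[2]) ∣ a - a')) :
    IsUnit (Z2i.of a + Z2i.of b * Z2i.i) ∧
    ∃ (u5 : Z2iˣ) (t : ℤ) (B : Z2i),
      (u5 : Z2i) = 5 ∧
      B - 1 ∈ Ideal.span {(2 + 2 * Z2i.i : Z2i)} ∧
      Z2i.of a' + Z2i.of b' * Z2i.i =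
        (↑(u5 ^ (2 * t)) : Z2i) * B ^ 4 * (Z2i.of a + Z2i.of b * Z2i.i) := by
  have H : (Z2i.of a)^2 + (Z2i.of b)^2 = 1 := by
    have := congrArg Z2i.of h; simpa only [map_add, map_pow, map_one] using this
  have hinv : (Z2i.of a + Z2i.of b * Z2i.i) * (Z2i.of a - Z2i.of b * Z2i.i) = 1 := by
    linear_combination H - (Z2i.of b)^2*hi_sq
  refine ⟨IsUnit.of_mul_eq_one _ hinv, ?_⟩
  -- units 5 and 25
  have h5z : IsUnit (5:ℤ_[2]) := isUnit_of_odd _ (by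
    rw [show (5:ℤ_[2]) = 2*2+1 by norm_num]; exact odd_not_two_dvd 2)
  have h5 : IsUnit (5:Z2i) := by have := h5z.map Z2i.of; rwa [map_ofNat] at this
  have h25 : IsUnit (25:ℤ_[2]) := isUnit_of_odd _ (by
    rw [show (25:ℤ_[2]) = 2*12+1 by norm_num]; exact odd_not_two_dvd 12)
  -- congruence data
  obtain ⟨e, D, hce4, hde⟩ : ∃ e D, a*a'+b*b' = 1 + 4*e ∧ a*b' - a'*b = 8*D := by
    rcases hcase with ⟨haU, ha'U, ⟨s,hs⟩, ⟨t2,ht2⟩⟩ | ⟨hbU, hb'U, ⟨s,hs⟩, ⟨t2,ht2⟩⟩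
    · obtain ⟨b1, hb1⟩ := four_dvd a b haU h
      exact ⟨-(a*s) - 8*b1*t2, -(a*t2) + 2*b1*s,
        by linear_combination h - a*hs - b*ht2 - 8*t2*hb1,
        by linear_combination b*hs - a*ht2 + 4*s*hb1⟩
    · obtain ⟨a1, ha1⟩ := four_dvd b a hbU (by linear_combination h)
      exact ⟨-8*a1*t2 - b*s, -2*a1*s + t2*b,
        by linear_combination h - a*ht2 - b*hs - 8*t2*ha1,
        by linear_combination b*ht2 - a*hs - 4*s*ha1⟩
  have hcd : (1+4*e)^2 + (8*D)^2 = 1 := by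
    rw [← hce4, ← hde]; linear_combination (a'^2+b'^2)*h + h'
  have he8 : e + 2*e^2 + 8*D^2 = 0 := by
    have h8 : (8:ℤ_[2]) * (e + 2*e^2 + 8*D^2) = 8 * 0 := by linear_combination hcd
    exact mul_left_cancel₀ (by norm_num) h8
  obtain ⟨e3, he3⟩ : ∃ e3, e = 8*e3 := by
    rcases parity e with ⟨j,hj⟩|⟨j,hj⟩
    swap
    · exact (odd_not_two_dvd 0 ⟨-j - e^2 - 4*D^2, by linear_combination he8 - hj⟩).elim
    · have hj2 : j + 4*j^2 + 4*D^2 = 0 := by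
        have := he8; rw [hj] at this
        have h2 : (2:ℤ_[2]) * (j + 4*j^2 + 4*D^2) = 2*0 := by linear_combination this
        exact mul_left_cancel₀ (by norm_num) h2
      rcases parity j with ⟨j2,hjj⟩|⟨j2,hjj⟩
      swap
      · exact (odd_not_two_dvd 0 ⟨-j2 - 2*j^2 - 2*D^2, by linear_combination hj2 - hjj⟩).elim
      · have hj3 : j2 + 8*j2^2 + 2*D^2 = 0 := by
          have := hj2; rw [hjj] at this
          have h2 : (2:ℤ_[2]) * (j2 + 8*j2^2 + 2*D^2) = 2*0 := by linear_combination this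
          exact mul_left_cancel₀ (by norm_num) h2
        rcases parity j2 with ⟨e3,hj4⟩|⟨e3,hj4⟩
        · exact ⟨e3, by rw [hj, hjj, hj4]; ring⟩
        · exact (odd_not_two_dvd 0 ⟨-e3 - 4*j2^2 - D^2, by linear_combination hj3 - hj4⟩).elim
  have hce : a*a' + b*b' = 1 + 32*e3 := by rw [hce4, he3]; ring
  have HC : Z2i.of a * Z2i.of a' + Z2i.of b * Z2i.of b' = 1 + 32*Z2i.of e3 := by
    have := congrArg Z2i.of hce
    simpa only [map_add, map_mul, map_one, map_ofNat] using this
  have HD : Z2i.of a * Z2i.of b' - Z2i.of a' * Z2i.of b = 8 * Z2i.of D := by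
    have := congrArg Z2i.of hde
    simpa only [map_sub, map_mul, map_ofNat] using this
  rcases parity D with ⟨D1, hD⟩ | ⟨D1, hD⟩
  · -- t = 0
    obtain ⟨B, hBm, hB4⟩ := key (4*e3) D ⟨2*e3 - D1, by linear_combination -hD⟩
    refine ⟨h5.unit, 0, B, h5.unit_spec, hBm, ?_⟩
    have hz : ((h5.unit ^ (2 * (0:ℤ)) : Z2iˣ) : Z2i) = 1 := by norm_num
    rw [hz, one_mul, hB4]
    simp only [map_add, map_mul, map_one, map_ofNat]
    linear_combination (-(Z2i.of a' + Z2i.of b'*Z2i.i))*H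
      + (Z2i.of a + Z2i.of b*Z2i.i)*HC + ((Z2i.of a + Z2i.of b*Z2i.i)*Z2i.i)*HD
      + (-(Z2i.of a*Z2i.of b*Z2i.of b' - Z2i.of a'*(Z2i.of b)^2))*hi_sq
  · -- t = 1
    set zi : ℤ_[2] := ↑h25.unit⁻¹ with hzi
    have hz25 : (25:ℤ_[2]) * zi = 1 := h25.mul_val_inv
    obtain ⟨B, hBm, hB4⟩ := key ((4*e3 - 3)*zi) (D*zi)
      ⟨(2*e3 - 2 - D1)*zi, by linear_combination -zi*hD⟩
    refine ⟨h5.unit, 1, B, h5.unit_spec, hBm, ?_⟩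
    have hval : ((h5.unit ^ (2 * (1:ℤ)) : Z2iˣ) : Z2i) = 5 * 5 := by
      rw [show (2 * (1:ℤ)) = ((2:ℕ):ℤ) by norm_num, zpow_natCast, Units.val_pow_eq_pow_val,
        h5.unit_spec]; ring
    rw [hval, hB4]
    have HZ : (25:Z2i) * Z2i.of zi = 1 := by
      have := congrArg Z2i.of hz25
      simpa only [map_mul, map_one, map_ofNat] using this
    simp only [map_add, map_sub, map_mul, map_one, map_ofNat]
    linear_combination (-(Z2i.of a' + Z2i.of b'*Z2i.i))*H
      + (Z2i.of a + Z2i.of b*Z2i.i)*HC + ((Z2i.of a + Z2i.of b*Z2i.i)*Z2i.i)*HD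
      + (-(Z2i.of a*Z2i.of b*Z2i.of b' - Z2i.of a'*(Z2i.of b)^2))*hi_sq
      + (-((8*(4*Z2i.of e3 - 3) + 8*Z2i.of D*Z2i.i)*(Z2i.of a + Z2i.of b*Z2i.i)))*HZ
end

section
/- Let b be an integer with b ≡ 2 (mod 4) and set d = b²/4 + 1, so that d ≡ 2 (mod 8) and d is not a square in ℚ₂. Let K = ℚ₂(√d) = ℚ₂[X]/(X² − d), with √d denoting the class of X, and let ε = b/2 + √d ∈ K. Then there exist ξ, η ∈ K with ξ² − 5·η² = ε, but there do NOT exist ξ, η ∈ K with ξ² − (1 + 2√d)·η² = ε. -/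
def ev (r : ZMod 4) : Prop := r = 0 ∨ r = 2

instance : DecidablePred ev := fun r => by unfold ev; infer_instance

-- divisibility via toZModPow
lemma pow_dvd_iff (n : ℕ) (t : ℤ_[2]) :
    PadicInt.toZModPow n t = 0 ↔ (2:ℤ_[2])^n ∣ t := by
  rw [← RingHom.mem_ker, PadicInt.ker_toZModPow, Ideal.mem_span_singleton]
  norm_num

lemma bridge (t : ℤ_[2]) : (2:ℤ_[2]) ∣ t ↔ ev (PadicInt.toZModPow 2 t) := by
  constructor
  · rintro ⟨s, rfl⟩
    have h : ∀ c : ZMod 4, ev (2 * c) := by decide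
    have := h (PadicInt.toZModPow 2 s)
    rwa [show (2:ZMod 4) * PadicInt.toZModPow 2 s = PadicInt.toZModPow 2 (2*s) by
      rw [map_mul, map_ofNat]] at this
  · intro hev
    have h2 : ∃ c : ZMod 4, PadicInt.toZModPow 2 t = 2 * c := by
      rcases hev with h | h
      · exact ⟨0, by rw [h]; ring⟩
      · exact ⟨1, by rw [h]; ring⟩
    obtain ⟨c, hc⟩ := h2
    have hlift : PadicInt.toZModPow 2 ((c.val : ℤ_[2])) = c := by
      rw [map_natCast, ZMod.natCast_val, ZMod.cast_id]
    have h0 : PadicInt.toZModPow 2 (t - 2 * (c.val : ℤ_[2])) = 0 := by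
      rw [map_sub, map_mul, map_ofNat, hlift, hc]; ring
    rw [pow_dvd_iff] at h0
    obtain ⟨s, hs⟩ := h0
    exact ⟨(c.val : ℤ_[2]) + 2 * s, by linear_combination hs⟩

lemma parity_s17 (t : ℤ_[2]) : (2:ℤ_[2]) ∣ t ∨ (2:ℤ_[2]) ∣ (t - 1) := by
  have h2 : ∀ r : ZMod 4, ev r ∨ ev (r - 1) := by decide
  rcases h2 (PadicInt.toZModPow 2 t) with h | h
  · exact Or.inl ((bridge t).2 h)
  · refine Or.inr ((bridge (t-1)).2 ?_)
    rwa [map_sub, map_one]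

lemma odd_sq (t : ℤ_[2]) (h : ¬ (2:ℤ_[2]) ∣ t) : ∃ w : ℤ_[2], t^2 = 1 + 8*w := by
  rcases parity_s17 t with h' | h'
  · exact absurd h' h
  obtain ⟨s, hs⟩ := h'
  have ht : t = 2*s + 1 := by linear_combination hs
  rcases parity_s17 s with ⟨r, hr⟩ | ⟨r, hr⟩
  · exact ⟨r * (2*r+1), by rw [ht, hr]; ring⟩
  · have hs2 : s = 2*r + 1 := by linear_combination hr
    exact ⟨2*r^2 + 3*r + 1, by rw [ht, hs2]; ring⟩

-- ZMod 4 decide lemmas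
set_option synthInstance.maxHeartbeats 1000000 in
set_option synthInstance.maxSize 2048 in
lemma link1 (x y u v : ZMod 4)
    (h : x^2 + 2*y^2 - u^2 - 2*v^2 - 4*2*u*v = 0) : (ev x ↔ ev u) := by
  revert h; revert x y u v; decide

set_option synthInstance.maxHeartbeats 1000000 in
set_option synthInstance.maxSize 2048 in
lemma link2 (x y u v : ZMod 4) (hx : ev x) (hu : ev u)
    (h : x^2 + 2*y^2 - u^2 - 2*v^2 - 4*2*u*v = 0) : (ev y ↔ ev v) := by
  revert hx hu h; revert x y u v; decide

set_option synthInstance.maxHeartbeats 1000000 in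
set_option synthInstance.maxSize 2048 in
lemma oddLem (x y u v e : ZMod 4) (he : e = 2 ∨ e = 0)
    (hx : ¬ ev x) (hu : ¬ ev u)
    (h1 : x^2 + 2*y^2 - u^2 - 2*v^2 - 4*2*u*v = 0)
    (h2 : x*y - u*v - u^2 - 2*v^2 = e) : False := by
  revert he hx hu h1 h2; revert x y u v e; decide

set_option synthInstance.maxHeartbeats 1000000 in
set_option synthInstance.maxSize 2048 in
lemma evenLem (a c y v mm e : ZMod 4) (he : e = 1 ∨ e = 0)
    (hy : ¬ ev y) (hv : ¬ ev v) (hm : ¬ ev mm)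
    (h1 : a^2 - c^2 = e * mm)
    (h2 : a*y - c*v - 2*c^2 - 1 = e) : False := by
  revert he hy hv hm h1 h2; revert a c y v mm e; decide


lemma d_not_square (m : ℤ) (hm : m % 2 = 1) (t : ℚ_[2]) :
    t ^ 2 ≠ ((m ^ 2 + 1 : ℤ) : ℚ_[2]) := by
  intro h
  set d : ℤ := m ^ 2 + 1 with hd
  have hdo : d = 2 * (d / 2) ∧ (d / 2) % 2 = 1 := by
    obtain ⟨q, rfl⟩ : ∃ q, m = 2*q+1 := ⟨m/2, by omega⟩
    have : d = 2 * (2*(q^2+q) + 1) := by rw [hd]; ring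
    omega
  have hnorm_d : ‖((d : ℤ) : ℚ_[2])‖ = 1/2 := by
    rw [hdo.1]
    push_cast
    rw [norm_mul]
    have h2 : ‖(2 : ℚ_[2])‖ = 1/2 := by
      have := Padic.norm_p (p := 2)
      simpa using this
    have he : ‖((d / 2 : ℤ) : ℚ_[2])‖ = 1 := by
      apply le_antisymm (Padic.norm_int_le_one _)
      by_contra hlt
      push_neg at hlt
      have := (Padic.norm_intCast_lt_one_iff (p := 2) (k := d/2)).1 hlt
      omega
    rw [h2, he]; ring
  have ht0 : t ≠ 0 := by
    intro h0
    rw [h0] at h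
    simp at h
    rw [← h] at hnorm_d
    norm_num at hnorm_d
  have hv := Padic.norm_eq_zpow_neg_valuation ht0
  have : ‖t ^ 2‖ = ‖t‖ ^ 2 := by rw [norm_pow]
  rw [h, hnorm_d, hv] at this
  have h2 : ((2:ℕ) : ℝ) ^ (-(2 * t.valuation)) = ((2:ℕ) : ℝ) ^ (-1 : ℤ) := by
    have h2' : ((2:ℕ):ℝ) ^ (-(2 * t.valuation)) = (((2:ℕ):ℝ) ^ (-t.valuation)) ^ (2:ℕ) := by
      rw [← zpow_natCast (((2:ℕ):ℝ) ^ (-t.valuation)) 2, ← zpow_mul]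
      ring_nf
    rw [h2', ← this]
    norm_num
  have := zpow_right_injective₀ (by norm_num : (0:ℝ) < ((2:ℕ):ℝ)) (by norm_num) h2
  omega

section coords
variable (K : Type) [Field K] [Algebra ℚ_[2] K]

lemma indep (sqd : K) (dd : ℚ_[2]) (hsq : sqd ^ 2 = algebraMap ℚ_[2] K dd)
    (hdd : ∀ t : ℚ_[2], t ^ 2 ≠ dd) (a b : ℚ_[2])
    (h : algebraMap ℚ_[2] K a + algebraMap ℚ_[2] K b * sqd = 0) : a = 0 ∧ b = 0 := by
  have hinj := (algebraMap ℚ_[2] K).injective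
  by_cases hb : b = 0
  · subst hb
    simp at h
    exact ⟨by simpa using hinj (by simpa using h : algebraMap ℚ_[2] K a = algebraMap ℚ_[2] K 0), rfl⟩
  · exfalso
    have hbK : algebraMap ℚ_[2] K b ≠ 0 := fun hh => hb (by
      apply hinj; simpa using hh)
    have hsqd_eq : sqd = algebraMap ℚ_[2] K (-a / b) := by
      rw [map_div₀, map_neg, eq_div_iff hbK]
      linear_combination h
    apply hdd (-a / b)
    apply hinj
    rw [map_pow, ← hsqd_eq, hsq]

lemma coords (hrank : Module.finrank ℚ_[2] K = 2) (sqd : K) (dd : ℚ_[2])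
    (hsq : sqd ^ 2 = algebraMap ℚ_[2] K dd) (hdd : ∀ t : ℚ_[2], t ^ 2 ≠ dd) (z : K) :
    ∃ a b : ℚ_[2], z = algebraMap ℚ_[2] K a + algebraMap ℚ_[2] K b * sqd := by
  have hli : LinearIndependent ℚ_[2] ![(1 : K), sqd] := by
    rw [LinearIndependent.pair_iff]
    intro s t hst
    apply indep K sqd dd hsq hdd s t
    rw [Algebra.smul_def, Algebra.smul_def] at hst
    simpa [mul_comm] using hst
  have hspan := hli.span_eq_top_of_card_eq_finrank (by simp [hrank])
  have hz : z ∈ Submodule.span ℚ_[2] ({(1:K), sqd} : Set K) := by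
    have : Set.range ![(1:K), sqd] = {(1:K), sqd} := by
      rw [show ![(1:K), sqd] = ![(1:K), sqd] from rfl]
      ext w
      simp [Matrix.range_cons, Matrix.range_empty, or_comm]
    rw [← this, hspan]
    trivial
  obtain ⟨s, t, hst⟩ := Submodule.mem_span_pair.1 hz
  exact ⟨s, t, by rw [← hst, Algebra.smul_def, Algebra.smul_def, mul_one]⟩

end coords


open Polynomial in
lemma sqrt_exists (c : ℤ) (hc : c % 8 = 1) : ∃ r : ℤ_[2], r ^ 2 = (c : ℤ_[2]) := by
  have h1 : ((X ^ 2 - C ((c:ℤ) : ℤ_[2])).eval 1) = ((1 - c : ℤ) : ℤ_[2]) := by simp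
  have h2 : ((X ^ 2 - C ((c:ℤ) : ℤ_[2])).derivative.eval 1) = (2 : ℤ_[2]) := by
    simp [Polynomial.derivative_sub]
    norm_num
  have hn1 : ‖((1 - c : ℤ) : ℤ_[2])‖ ≤ ((2:ℕ) : ℝ) ^ (-(3:ℕ) : ℤ) := by
    rw [PadicInt.norm_int_le_pow_iff_dvd]
    exact_mod_cast (by omega : ((2:ℤ)^3) ∣ (1 - c))
  have hn2 : ‖(2 : ℤ_[2])‖ = (2:ℝ)⁻¹ := by
    simpa using PadicInt.norm_p (p := 2)
  have hnorm : ‖(X ^ 2 - C ((c:ℤ) : ℤ_[2])).eval 1‖ <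
      ‖(X ^ 2 - C ((c:ℤ) : ℤ_[2])).derivative.eval 1‖ ^ 2 := by
    rw [h1, h2, hn2]
    calc ‖((1 - c : ℤ) : ℤ_[2])‖ ≤ ((2:ℕ) : ℝ) ^ (-(3:ℕ) : ℤ) := hn1
      _ < ((2:ℝ)⁻¹)^2 := by norm_num
  obtain ⟨z, hz, -⟩ := hensels_lemma hnorm
  refine ⟨z, ?_⟩
  have : z ^ 2 - (c : ℤ_[2]) = 0 := by simpa using hz
  linear_combination this

lemma sq_one_mod2 : ∀ r : ZMod 4, ¬ ev r → r^2 + 1 = 2 := by decide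

lemma norm_two_q : ‖(2:ℚ_[2])‖ = 1/2 := by
  have := Padic.norm_p (p := 2)
  simpa using this

lemma no_sol (m : ℤ) (hm : m % 2 = 1) (x y u v : ℚ_[2])
    (e1 : x^2 + ((m^2+1:ℤ):ℚ_[2])*y^2 - u^2 - ((m^2+1:ℤ):ℚ_[2])*v^2
      - 4*((m^2+1:ℤ):ℚ_[2])*u*v = ((m:ℤ):ℚ_[2]))
    (e2 : 2*x*y - 2*u*v - 2*u^2 - 2*((m^2+1:ℤ):ℚ_[2])*v^2 = 1) : False := by
  classical
  -- find minimal k making everything integral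
  have key : ∀ q : ℚ_[2], ∃ n : ℕ, ∀ k, n ≤ k → ‖(2:ℚ_[2])^k * q‖ ≤ 1 := by
    intro q
    obtain ⟨n, hn⟩ := exists_nat_gt ‖q‖
    refine ⟨n, fun k hk => ?_⟩
    rw [norm_mul, norm_pow, norm_two_q]
    have h1 : ‖q‖ ≤ 2^n := le_trans hn.le (by exact_mod_cast Nat.lt_two_pow_self (n := n) |>.le)
    have h2 : (0:ℝ) < 2^k := by positivity
    have h3 : (2:ℝ)^n ≤ 2^k := by
      apply pow_le_pow_right₀ (by norm_num) hk
    calc (1/2:ℝ)^k * ‖q‖ ≤ (1/2)^k * 2^n := by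
          apply mul_le_mul_of_nonneg_left h1 (by positivity)
      _ ≤ (1/2)^k * 2^k := by
          apply mul_le_mul_of_nonneg_left h3 (by positivity)
      _ = 1 := by rw [div_pow, one_pow]; field_simp
  have hPex : ∃ n : ℕ, ‖(2:ℚ_[2])^n * x‖ ≤ 1 ∧ ‖(2:ℚ_[2])^n * y‖ ≤ 1
      ∧ ‖(2:ℚ_[2])^n * u‖ ≤ 1 ∧ ‖(2:ℚ_[2])^n * v‖ ≤ 1 := by
    obtain ⟨nx, hx⟩ := key x
    obtain ⟨ny, hy⟩ := key y
    obtain ⟨nu, hu⟩ := key u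
    obtain ⟨nv, hv⟩ := key v
    refine ⟨max (max nx ny) (max nu nv), ?_, ?_, ?_, ?_⟩ <;>
      [exact hx _ (by omega); exact hy _ (by omega); exact hu _ (by omega); exact hv _ (by omega)]
  set P : ℕ → Prop := fun n => ‖(2:ℚ_[2])^n * x‖ ≤ 1 ∧ ‖(2:ℚ_[2])^n * y‖ ≤ 1
      ∧ ‖(2:ℚ_[2])^n * u‖ ≤ 1 ∧ ‖(2:ℚ_[2])^n * v‖ ≤ 1 with hPdef
  have hPex' : ∃ n, P n := hPex
  set k := Nat.find hPex' with hkdef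
  have hPk : P k := Nat.find_spec hPex'
  obtain ⟨hx1, hy1, hu1, hv1⟩ := hPk
  set X : ℤ_[2] := ⟨(2:ℚ_[2])^k * x, hx1⟩ with hXdef
  set Y : ℤ_[2] := ⟨(2:ℚ_[2])^k * y, hy1⟩ with hYdef
  set U : ℤ_[2] := ⟨(2:ℚ_[2])^k * u, hu1⟩ with hUdef
  set V : ℤ_[2] := ⟨(2:ℚ_[2])^k * v, hv1⟩ with hVdef
  set DZ : ℤ_[2] := ((m^2+1 : ℤ) : ℤ_[2]) with hDZdef
  set MZ : ℤ_[2] := ((m : ℤ) : ℤ_[2]) with hMZdef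
  have hpow : (((2:ℚ_[2])^k))^2 = (4:ℚ_[2])^k := by
    rw [← pow_mul, show ((4:ℚ_[2])) = 2^2 from by norm_num, ← pow_mul, mul_comm]
  have E1 : X^2 + DZ*Y^2 - U^2 - DZ*V^2 - 4*DZ*U*V = 4^k * MZ := by
    apply Subtype.ext
    push_cast
    push_cast [hXdef, hYdef, hUdef, hVdef, hDZdef, hMZdef]
    simp only [show ((2:ℤ_[2]):ℚ_[2]) = 2 from rfl, show ((4:ℤ_[2]):ℚ_[2]) = 4 from rfl]
    push_cast at e1
    linear_combination (((2:ℚ_[2])^k)^2) * e1 + ((m:ℚ_[2])) * hpow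
  have E2 : 2*(X*Y - U*V - U^2 - DZ*V^2) = 4^k := by
    apply Subtype.ext
    push_cast
    push_cast [hXdef, hYdef, hUdef, hVdef, hDZdef]
    simp only [show ((2:ℤ_[2]):ℚ_[2]) = 2 from rfl, show ((4:ℤ_[2]):ℚ_[2]) = 4 from rfl]
    push_cast at e2
    linear_combination (((2:ℚ_[2])^k)^2) * e2 + hpow
  have h2ne : (2:ℤ_[2]) ≠ 0 := by
    intro h
    have := congrArg (fun t : ℤ_[2] => ‖t‖) h
    rw [show ‖(2:ℤ_[2])‖ = 1/2 from by simpa using PadicInt.norm_p (p := 2)] at this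
    norm_num at this
  have h4ne : (4:ℤ_[2]) ≠ 0 := by
    intro h
    apply h2ne
    have : (2:ℤ_[2])*2 = 0 := by rw [show (2:ℤ_[2])*2 = 4 from by norm_num, h]
    rcases mul_eq_zero.1 this with h' | h' <;> exact h'
  have hdvd_half : ∀ t : ℤ_[2], (2:ℤ_[2]) ∣ t → ‖t‖ ≤ 1/2 := by
    rintro t ⟨s, rfl⟩
    rw [norm_mul, show ‖(2:ℤ_[2])‖ = 1/2 from by simpa using PadicInt.norm_p (p := 2)]
    have := s.2
    calc 1/2 * ‖s‖ ≤ 1/2 * 1 := by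
          apply mul_le_mul_of_nonneg_left (PadicInt.norm_le_one s) (by norm_num)
      _ = 1/2 := by norm_num
  have hModd : ¬ (2:ℤ_[2]) ∣ MZ := by
    intro h
    have h1 := hdvd_half _ h
    rw [hMZdef] at h1
    have h2 : ‖((m:ℤ) : ℤ_[2])‖ < 1 := lt_of_le_of_lt h1 (by norm_num)
    rw [PadicInt.norm_int_lt_one_iff_dvd] at h2
    omega
  -- case k = 0
  rcases Nat.eq_zero_or_pos k with hk0 | hkpos
  · rw [hk0, pow_zero] at E2
    have : (2:ℤ_[2]) ∣ 1 := ⟨_, E2.symm⟩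
    have := hdvd_half _ this
    rw [norm_one] at this
    norm_num at this
  -- case k ≥ 1
  obtain ⟨j, hkj⟩ : ∃ j, k = j + 1 := ⟨k - 1, by omega⟩
  have hnotP : ¬ P j := Nat.find_min hPex' (by omega)
  have hunit : ∀ (q : ℚ_[2]) (h1 : ‖(2:ℚ_[2])^k * q‖ ≤ 1), ¬ ‖(2:ℚ_[2])^j * q‖ ≤ 1 →
      ¬ (2:ℤ_[2]) ∣ (⟨(2:ℚ_[2])^k * q, h1⟩ : ℤ_[2]) := by
    intro q h1 h2 hdvd
    obtain ⟨s, hs⟩ := hdvd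
    apply h2
    have hcoe : (2:ℚ_[2])^k * q = 2 * (s : ℚ_[2]) := by
      have := congrArg (fun t : ℤ_[2] => (t : ℚ_[2])) hs
      simpa [show ((2:ℤ_[2]):ℚ_[2]) = 2 from rfl] using this
    have hs' : (s : ℚ_[2]) = (2:ℚ_[2])^j * q := by
      have h2q : (2:ℚ_[2]) ≠ 0 := two_ne_zero
      apply mul_left_cancel₀ h2q
      rw [← hcoe, hkj]
      ring
    rw [← hs']
    exact s.2
  have hodd : ¬(2:ℤ_[2]) ∣ X ∨ ¬(2:ℤ_[2]) ∣ Y ∨ ¬(2:ℤ_[2]) ∣ U ∨ ¬(2:ℤ_[2]) ∣ V := by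
    rw [hPdef] at hnotP
    simp only [not_and_or] at hnotP
    rcases hnotP with h | h | h | h
    · exact Or.inl (hunit x hx1 h)
    · exact Or.inr (Or.inl (hunit y hy1 h))
    · exact Or.inr (Or.inr (Or.inl (hunit u hu1 h)))
    · exact Or.inr (Or.inr (Or.inr (hunit v hv1 h)))
  -- structure facts
  have hDZ2 : DZ = MZ^2 + 1 := by rw [hDZdef, hMZdef]; push_cast; ring
  obtain ⟨w3, hw3⟩ := odd_sq MZ hModd
  have hD8 : DZ = 2*(1+4*w3) := by rw [hDZ2]; linear_combination hw3
  have hfd : PadicInt.toZModPow (p := 2) 2 DZ = 2 := by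
    rw [hDZ2, map_add, map_pow, map_one]
    exact sq_one_mod2 _ (fun hc => hModd ((bridge MZ).2 hc))
  have hz4 : (4:ZMod 4) = 0 := by decide
  -- mapped E1
  have h1m := congrArg (PadicInt.toZModPow (p := 2) 2) E1
  simp only [map_add, map_sub, map_mul, map_pow, map_ofNat, hfd] at h1m
  have hq : (4:ZMod 4)^k = 0 := by rw [hkj, hz4]; exact zero_pow (Nat.succ_ne_zero j)
  have hA : (PadicInt.toZModPow (p := 2) 2 X)^2 + 2*(PadicInt.toZModPow (p := 2) 2 Y)^2
      - (PadicInt.toZModPow (p := 2) 2 U)^2 - 2*(PadicInt.toZModPow (p := 2) 2 V)^2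
      - 4*2*(PadicInt.toZModPow (p := 2) 2 U)*(PadicInt.toZModPow (p := 2) 2 V) = 0 := by
    linear_combination h1m + (PadicInt.toZModPow (p := 2) 2 MZ) * hq
  -- E2 divided by 2
  have E2' : X*Y - U*V - U^2 - DZ*V^2 = 2*4^j := by
    apply mul_left_cancel₀ h2ne
    rw [E2, hkj]
    ring
  have h2m := congrArg (PadicInt.toZModPow (p := 2) 2) E2'
  simp only [map_add, map_sub, map_mul, map_pow, map_ofNat, hfd] at h2m
  set E : ZMod 4 := 2 * 4^j with hEdef
  have hE : E = 2 ∨ E = 0 := by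
    rcases Nat.eq_zero_or_pos j with hj0 | hjpos
    · left; rw [hEdef, hj0]; norm_num
    · right
      obtain ⟨j', hj'⟩ : ∃ j', j = j' + 1 := ⟨j - 1, by omega⟩
      rw [hEdef, hj', hz4, zero_pow (Nat.succ_ne_zero j'), mul_zero]
  have hB : (PadicInt.toZModPow (p := 2) 2 X)*(PadicInt.toZModPow (p := 2) 2 Y)
      - (PadicInt.toZModPow (p := 2) 2 U)*(PadicInt.toZModPow (p := 2) 2 V)
      - (PadicInt.toZModPow (p := 2) 2 U)^2 - 2*(PadicInt.toZModPow (p := 2) 2 V)^2 = E := by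
    rw [hEdef]
    linear_combination h2m
  by_cases hX2 : (2:ℤ_[2]) ∣ X
  · -- even case
    have hU2 : (2:ℤ_[2]) ∣ U := (bridge U).2 ((link1 _ _ _ _ hA).1 ((bridge X).1 hX2))
    have hYV : ¬(2:ℤ_[2]) ∣ Y ∧ ¬(2:ℤ_[2]) ∣ V := by
      have hlk := link2 _ _ _ _ ((bridge X).1 hX2) ((bridge U).1 hU2) hA
      rcases hodd with h | h | h | h
      · exact absurd hX2 h
      · exact ⟨h, fun hV => h ((bridge Y).2 (hlk.2 ((bridge V).1 hV)))⟩
      · exact absurd hU2 h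
      · exact ⟨fun hY => h ((bridge V).2 (hlk.1 ((bridge Y).1 hY))), h⟩
    obtain ⟨hYodd, hVodd⟩ := hYV
    obtain ⟨a, ha⟩ := hX2
    obtain ⟨c, hc⟩ := hU2
    obtain ⟨w1, hw1⟩ := odd_sq Y hYodd
    obtain ⟨w2, hw2⟩ := odd_sq V hVodd
    rw [ha, hc, hD8, hw1, hw2, hkj, pow_succ] at E1
    rw [ha, hc, hD8, hw2] at E2'
    have E1e : a^2 - c^2 + 4*((1+4*w3)*(w1-w2)) - 4*((1+4*w3)*c*V) = 4^j * MZ := by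
      apply mul_left_cancel₀ h4ne
      linear_combination E1
    have E2e : a*Y - c*V - 2*c^2 - 1 - 4*(w3 + 2*w2 + 8*(w3*w2)) = 4^j := by
      apply mul_left_cancel₀ h2ne
      linear_combination E2'
    have h1f := congrArg (PadicInt.toZModPow (p := 2) 2) E1e
    simp only [map_add, map_sub, map_mul, map_pow, map_one, map_ofNat] at h1f
    have h2f := congrArg (PadicInt.toZModPow (p := 2) 2) E2e
    simp only [map_add, map_sub, map_mul, map_pow, map_one, map_ofNat] at h2f
    set ε : ZMod 4 := (4:ZMod 4)^j with hεdef
    have hε : ε = 1 ∨ ε = 0 := by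
      rcases Nat.eq_zero_or_pos j with hj0 | hjpos
      · left; rw [hεdef, hj0, pow_zero]
      · right; rw [hεdef, hz4]; exact zero_pow (by omega)
    apply evenLem (PadicInt.toZModPow (p := 2) 2 a) (PadicInt.toZModPow (p := 2) 2 c)
      (PadicInt.toZModPow (p := 2) 2 Y) (PadicInt.toZModPow (p := 2) 2 V)
      (PadicInt.toZModPow (p := 2) 2 MZ) ε hε
      (fun hev => hYodd ((bridge Y).2 hev))
      (fun hev => hVodd ((bridge V).2 hev))
      (fun hev => hModd ((bridge MZ).2 hev))
    · rw [hεdef]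
      linear_combination h1f + (((1:ZMod 4)+4*(PadicInt.toZModPow (p := 2) 2 w3))
        * ((PadicInt.toZModPow (p := 2) 2 c)*(PadicInt.toZModPow (p := 2) 2 V)
          - ((PadicInt.toZModPow (p := 2) 2 w1) - (PadicInt.toZModPow (p := 2) 2 w2)))) * hz4
    · rw [hεdef]
      linear_combination h2f + ((PadicInt.toZModPow (p := 2) 2 w3)
        + 2*(PadicInt.toZModPow (p := 2) 2 w2)
        + 8*((PadicInt.toZModPow (p := 2) 2 w3)*(PadicInt.toZModPow (p := 2) 2 w2))) * hz4
  · -- odd case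
    have hU2 : ¬ (2:ℤ_[2]) ∣ U := fun hU =>
      hX2 ((bridge X).2 ((link1 _ _ _ _ hA).2 ((bridge U).1 hU)))
    exact oddLem _ _ _ _ E hE
      (fun hev => hX2 ((bridge X).2 hev))
      (fun hev => hU2 ((bridge U).2 hev))
      hA hB


theorem statement17 (b : ℤ) (hb : b % 4 = 2)
    (K : Type) [Field K] [Algebra ℚ_[2] K]
    (hrank : Module.finrank ℚ_[2] K = 2)
    (sqd : K)
    (hsqd : sqd ^ 2 = algebraMap ℚ_[2] K ((b ^ 2 / 4 + 1 : ℤ) : ℚ_[2])) :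
    (∃ ξ η : K,
      ξ ^ 2 - 5 * η ^ 2 = algebraMap ℚ_[2] K ((b / 2 : ℤ) : ℚ_[2]) + sqd) ∧
    ¬ (∃ ξ η : K,
      ξ ^ 2 - (1 + 2 * sqd) * η ^ 2 = algebraMap ℚ_[2] K ((b / 2 : ℤ) : ℚ_[2]) + sqd) := by
  obtain ⟨m, rfl⟩ : ∃ m : ℤ, b = 2 * m := ⟨b / 2, by omega⟩
  have hm : m % 2 = 1 := by omega
  have hd : (2 * m) ^ 2 / 4 + 1 = m ^ 2 + 1 := by
    have : (2*m)^2 = 4 * m^2 := by ring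
    rw [this]; omega
  have hb2 : (2 * m) / 2 = m := by omega
  rw [hd] at hsqd
  rw [hb2]
  haveI : CharZero K := charZero_of_injective_algebraMap (algebraMap ℚ_[2] K).injective
  constructor
  · -- existence for 5
    obtain ⟨r, hr⟩ := sqrt_exists (20 * m ^ 2 - 20 * m + 25) (by
      obtain ⟨q, rfl⟩ : ∃ q, m = 2*q+1 := ⟨m/2, by omega⟩
      have : 20*(2*q+1)^2 - 20*(2*q+1) + 25 = 8*(10*q^2+5*q+3) + 1 := by ring
      omega)
    set r' : K := algebraMap ℚ_[2] K ((r : ℚ_[2])) with hr'def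
    have hr' : r' ^ 2 = 20 * (m : K) ^ 2 - 20 * (m : K) + 25 := by
      have h0 : ((r : ℚ_[2])) ^ 2 = ((20 * m ^ 2 - 20 * m + 25 : ℤ) : ℚ_[2]) := by
        have := congrArg (fun t : ℤ_[2] => (t : ℚ_[2])) hr
        push_cast at this ⊢
        exact_mod_cast this
      rw [hr'def, ← map_pow, h0]
      push_cast
      simp [map_sub, map_add, map_mul, map_pow, map_ofNat]
    have hsqd' : sqd ^ 2 = (m : K) ^ 2 + 1 := by
      rw [hsqd]
      push_cast
      simp [map_add, map_pow, map_ofNat]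
    have hmK : algebraMap ℚ_[2] K ((m : ℤ) : ℚ_[2]) = (m : K) := by
      simp [map_intCast]
    rw [hmK]
    refine ⟨(2 : K)⁻¹ + sqd, r' / 10, ?_⟩
    linear_combination hsqd' - (1/20 : K) * hr'
  · -- non-existence for 1 + 2*sqd
    rintro ⟨ξ, η, heq⟩
    have hdd : ∀ t : ℚ_[2], t ^ 2 ≠ ((m ^ 2 + 1 : ℤ) : ℚ_[2]) := d_not_square m hm
    obtain ⟨x, y, hxy⟩ := coords K hrank sqd _ hsqd hdd ξ
    obtain ⟨u, v, huv⟩ := coords K hrank sqd _ hsqd hdd η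
    rw [hxy, huv] at heq
    set D : ℚ_[2] := ((m ^ 2 + 1 : ℤ) : ℚ_[2]) with hDdef
    set mq : ℚ_[2] := ((m : ℤ) : ℚ_[2]) with hmqdef
    have hz : algebraMap ℚ_[2] K (x^2 + D*y^2 - u^2 - D*v^2 - 4*(D*(u*v)) - mq)
        + algebraMap ℚ_[2] K (2*(x*y) - 2*(u*v) - 2*u^2 - 2*(D*v^2) - 1) * sqd = 0 := by
      simp only [map_add, map_sub, map_mul, map_pow, map_one, map_ofNat]
      linear_combination heq - ((algebraMap ℚ_[2] K y)^2 - (algebraMap ℚ_[2] K v)^2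
        - 4*((algebraMap ℚ_[2] K u)*(algebraMap ℚ_[2] K v))
        - 2*(algebraMap ℚ_[2] K v)^2*sqd) * hsqd
    obtain ⟨h1, h2⟩ := indep K sqd _ hsqd hdd _ _ hz
    exact no_sol m hm x y u v (by linear_combination h1) (by linear_combination h2)
end
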